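/- (Derivative identity underlying the CAVI update, Equation (9).) Let n ∈ ℕ, p ≥ 1, X ∈ ℝ^{n×p}, y ∈ {0,1}^n, β̃ ∈ ℝ^p, a > 0, α > 0, γ > 0, η ∈ ℝ^n with η_i ≠ 0 for all i, fix an index j ∈ {0,...,p−1} and values φ_k ∈ (0,1) for k ≠ j. For t ∈ (0,1) let φ(t) denote the vector with j-th coordinate t and k-th coordinate φ_k for k ≠ j, and define F(t) = −Σ_k φ(t)_k [ 1 + log p + a log p − (1/2) log(1+αγ) ] + α Σ_{i=1}^n { log( exp(η_i)/(1+exp(η_i)) ) − η_i/2 + (y_i − 1/2) m_i(t) − ( tanh(η_i/2)/(4η_i) ) [ v_i(t) + m_i(t)² − η_i² ] } − Σ_k [ φ(t)_k log φ(t)_k + (1−φ(t)_k) log(1−φ(t)_k) ], where m_i(t) = Σ_k φ(t)_k x_{ik} β̃_k and v_i(t) = Σ_k φ(t)_k (1−φ(t)_k) x_{ik}² β̃_k². Then for every t ∈ (0,1), F is differentiable at t with F′(t) = ω_j − log( t/(1−t) ), where ω_j = α β̃_j Σ_{i=1}^n (y_i − 1/2) x_{ij} − (α β̃_j / 4) Σ_{i=1}^n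 (1/η_i) tanh(η_i/2) ( x_{ij}² β̃_j + 2 x_{ij} Σ_{k≠j} φ_k x_{ik} β̃_k ) + (1/2) log(1+αγ) − (a+1) log p − 1. In particular, ω_j does not depend on t. -/

import Mathlib

open Finset

theorem stmt_13 (n p : ℕ) (hp : 1 ≤ p) (X : Fin n → Fin p → ℝ) (y : Fin n → ℝ)
    (hy : ∀ i, y i = 0 ∨ y i = 1) (βt : Fin p → ℝ)
    (a α γ : ℝ) (ha : 0 < a) (hα : 0 < α) (hγ : 0 < γ)
    (η : Fin n → ℝ) (hη : ∀ i, η i ≠ 0)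
    (j : Fin p) (φ : Fin p → ℝ) (hφ : ∀ k, k ≠ j → φ k ∈ Set.Ioo (0 : ℝ) 1)
    -- `Φ t` is the variational parameter vector with `j`-th coordinate `t`
    -- and the other coordinates fixed at `φ k`
    (Φ : ℝ → Fin p → ℝ) (hΦ : ∀ t k, Φ t k = if k = j then t else φ k)
    (m v : ℝ → Fin n → ℝ)
    (hm : ∀ t i, m t i = ∑ k : Fin p, Φ t k * X i k * βt k)
    (hv : ∀ t i, v t i = ∑ k : Fin p, Φ t k * (1 - Φ t k) * (X i k) ^ 2 * (βt k) ^ 2)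
    -- the closed-form ELBO objective as a function of the single coordinate `t`
    (F : ℝ → ℝ)
    (hF : ∀ t, F t =
      - (∑ k : Fin p, Φ t k * (1 + Real.log p + a * Real.log p
            - (1 / 2) * Real.log (1 + α * γ)))
      + α * ∑ i : Fin n,
          (Real.log (Real.exp (η i) / (1 + Real.exp (η i))) - η i / 2
            + (y i - 1 / 2) * m t i
            - (Real.tanh (η i / 2) / (4 * η i)) * (v t i + (m t i) ^ 2 - (η i) ^ 2))
      - ∑ k : Fin p, (Φ t k * Real.log (Φ t k) + (1 - Φ t k) * Real.log (1 - Φ t k)))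
    (ω : ℝ)
    (hω : ω = α * βt j * (∑ i : Fin n, (y i - 1 / 2) * X i j)
      - (α * βt j / 4) * ∑ i : Fin n, (1 / η i) * Real.tanh (η i / 2)
          * ((X i j) ^ 2 * βt j + 2 * X i j * ∑ k ∈ Finset.univ.erase j, φ k * X i k * βt k)
      + (1 / 2) * Real.log (1 + α * γ) - (a + 1) * Real.log p - 1) :
    ∀ t ∈ Set.Ioo (0 : ℝ) 1, HasDerivAt F (ω - Real.log (t / (1 - t))) t := by
  intro t ht
  obtain ⟨ht0, ht1⟩ := ht
  have ht1' : (1:ℝ) - t ≠ 0 := by linarith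
  have hΦj : ∀ t, Φ t j = t := fun t => by rw [hΦ]; simp
  have hΦk : ∀ (t:ℝ) k, k ∈ Finset.univ.erase j → Φ t k = φ k := by
    intro t k hk
    rw [hΦ, if_neg (Finset.ne_of_mem_erase hk)]
  have hsplit : ∀ (t:ℝ) (f : Fin p → ℝ → ℝ),
      ∑ k : Fin p, f k (Φ t k) = f j t + ∑ k ∈ Finset.univ.erase j, f k (φ k) := by
    intro t f
    rw [← Finset.add_sum_erase _ (fun k => f k (Φ t k)) (Finset.mem_univ j), hΦj]
    exact congrArg _ (Finset.sum_congr rfl fun k hk => by rw [hΦk t k hk])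
  set C : ℝ := 1 + Real.log p + a * Real.log p - (1 / 2) * Real.log (1 + α * γ) with hC
  set Sφ : ℝ := ∑ k ∈ Finset.univ.erase j, φ k with hSφ
  set b : Fin n → ℝ := fun i => X i j * βt j with hb
  set s : Fin n → ℝ := fun i => ∑ k ∈ Finset.univ.erase j, φ k * X i k * βt k with hs
  set w : Fin n → ℝ := fun i => ∑ k ∈ Finset.univ.erase j, φ k * (1 - φ k) * (X i k) ^ 2 * (βt k) ^ 2 with hw
  set c : Fin n → ℝ := fun i => Real.log (Real.exp (η i) / (1 + Real.exp (η i))) - η i / 2 with hc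
  set d : Fin n → ℝ := fun i => Real.tanh (η i / 2) / (4 * η i) with hd
  set E : ℝ := ∑ k ∈ Finset.univ.erase j, (φ k * Real.log (φ k) + (1 - φ k) * Real.log (1 - φ k)) with hE
  have hm' : ∀ (t:ℝ) i, m t i = t * b i + s i := by
    intro t i
    rw [hm, hsplit t (fun k x => x * X i k * βt k)]
    simp only [hb, hs]
    ring
  have hv' : ∀ (t:ℝ) i, v t i = t * (1 - t) * (X i j) ^ 2 * (βt j) ^ 2 + w i := by
    intro t i
    rw [hv, hsplit t (fun k x => x * (1 - x) * (X i k) ^ 2 * (βt k) ^ 2)]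
  have hFG : F = fun t => -(t * C + Sφ * C)
      + α * ∑ i : Fin n, (c i + (y i - 1 / 2) * (t * b i + s i)
          - d i * (t * (1 - t) * (X i j) ^ 2 * (βt j) ^ 2 + w i + (t * b i + s i) ^ 2 - (η i) ^ 2))
      - ((t * Real.log t + (1 - t) * Real.log (1 - t)) + E) := by
    funext u
    rw [hF]
    have h1 : ∑ k : Fin p, Φ u k * C = u * C + Sφ * C := by
      rw [hsplit u (fun k x => x * C), hSφ, Finset.sum_mul]
    have h3 : ∑ k : Fin p, (Φ u k * Real.log (Φ u k) + (1 - Φ u k) * Real.log (1 - Φ u k))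
        = (u * Real.log u + (1 - u) * Real.log (1 - u)) + E := by
      exact hsplit u (fun k x => x * Real.log x + (1 - x) * Real.log (1 - x))
    rw [h1, h3]
    have h2 : ∑ i : Fin n, (Real.log (Real.exp (η i) / (1 + Real.exp (η i))) - η i / 2
            + (y i - 1 / 2) * m u i
            - (Real.tanh (η i / 2) / (4 * η i)) * (v u i + (m u i) ^ 2 - (η i) ^ 2))
        = ∑ i : Fin n, (c i + (y i - 1 / 2) * (u * b i + s i)
          - d i * (u * (1 - u) * (X i j) ^ 2 * (βt j) ^ 2 + w i + (u * b i + s i) ^ 2 - (η i) ^ 2)) :=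
      Finset.sum_congr rfl fun i _ => by rw [hm', hv']
    rw [h2]
  rw [hFG]
  have hA : HasDerivAt (fun t : ℝ => t * C + Sφ * C) (1 * C) t :=
    ((hasDerivAt_id t).mul_const C).add_const _
  have hent1 : HasDerivAt (fun t : ℝ => t * Real.log t) (1 * Real.log t + t * t⁻¹) t :=
    (hasDerivAt_id t).mul (Real.hasDerivAt_log ht0.ne')
  have h1mt : HasDerivAt (fun t : ℝ => 1 - t) (0 - 1) t :=
    (hasDerivAt_const t 1).sub (hasDerivAt_id t)
  have hent2 : HasDerivAt (fun t : ℝ => (1 - t) * Real.log (1 - t))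
      ((0 - 1) * Real.log (1 - t) + (1 - t) * ((0 - 1) / (1 - t))) t :=
    h1mt.mul (h1mt.log ht1')
  have hlin : ∀ i, HasDerivAt (fun t : ℝ => t * b i + s i) (1 * b i) t :=
    fun i => ((hasDerivAt_id t).mul_const (b i)).add_const (s i)
  have hsumi : HasDerivAt (fun t : ℝ => ∑ i : Fin n, (c i + (y i - 1 / 2) * (t * b i + s i)
      - d i * (t * (1 - t) * (X i j) ^ 2 * (βt j) ^ 2 + w i + (t * b i + s i) ^ 2 - (η i) ^ 2)))
      (∑ i : Fin n, ((0 : ℝ) + (y i - 1 / 2) * (1 * b i)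
        - d i * ((1 * (1 - t) + t * (0 - 1)) * (X i j) ^ 2 * (βt j) ^ 2
          + ((2 : ℕ) : ℝ) * (t * b i + s i) ^ (2 - 1) * (1 * b i)))) t := by
    refine HasDerivAt.fun_sum fun i _ => ?_
    refine ((hasDerivAt_const t (c i)).add ((hlin i).const_mul _)).sub (HasDerivAt.const_mul _ ?_)
    exact ((((((hasDerivAt_id t).mul h1mt).mul_const _).mul_const _).add_const (w i)).add
      ((hlin i).pow 2)).sub_const _
  have hG := ((hA.neg).add (hsumi.const_mul α)).sub ((hent1.add hent2).add_const E)
  convert hG using 1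
  case e'_4 => rfl
  case e'_5 => rfl
  case e'_8 => rfl
  rw [hω, Real.log_div ht0.ne' ht1']
  have hsum_eq : ∑ i : Fin n, ((0 : ℝ) + (y i - 1 / 2) * (1 * b i)
        - d i * ((1 * (1 - t) + t * (0 - 1)) * (X i j) ^ 2 * (βt j) ^ 2
          + ((2 : ℕ) : ℝ) * (t * b i + s i) ^ (2 - 1) * (1 * b i)))
      = ∑ i : Fin n, ((y i - 1 / 2) * X i j * βt j
        - (βt j / 4) * ((1 / η i) * Real.tanh (η i / 2) * ((X i j) ^ 2 * βt j + 2 * X i j * s i))) := by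
    refine Finset.sum_congr rfl fun i _ => ?_
    simp only [hb, hd]
    field_simp [hη i]
    ring
  rw [hsum_eq, Finset.sum_sub_distrib, ← Finset.mul_sum, ← Finset.sum_mul]
  have htt : t * t⁻¹ = 1 := mul_inv_cancel₀ ht0.ne'
  have htt2 : (1 - t) * ((0 - 1) / (1 - t)) = -1 := by field_simp; ring
  rw [htt, htt2, hC]
  simp only [hs]
  ring
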